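/- For any two faces x, y ∈ ℱ of a central hyperplane arrangement 𝒜, the sign vector τ defined by τᵢ = σᵢ(x) if σᵢ(x) ≠ 0 and τᵢ = σᵢ(y) if σᵢ(x) = 0 is again the sign vector of a face, i.e. ⋂ᵢ Hᵢ^{τᵢ} ≠ ∅. Consequently ℱ is closed under the product (x,y) ↦ xy given by this sign vector, and ℱ is a monoid with identity 1 = ⋂ᵢ Hᵢ. -/
import Mathlib


/-!
STATEMENT 0: For any two faces x, y ∈ ℱ of a central hyperplane arrangement 𝒜, the sign
vector τ defined by τᵢ = σᵢ(x) if σᵢ(x) ≠ 0 and τᵢ = σᵢ(y) if σᵢ(x) = 0 is again the sign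
vector of a face, i.e. ⋂ᵢ Hᵢ^{τᵢ} ≠ ∅.  Consequently ℱ is closed under the product
(x,y) ↦ xy given by this sign vector, and ℱ is a monoid with identity 1 = ⋂ᵢ Hᵢ.
-/

open scoped Classical

noncomputable section

namespace FaceSemigroup

variable {d n : ℕ}

/-- The cell (possibly empty) of `ℝ^d` determined by a sign vector: the intersection
`⋂ᵢ Hᵢ^{σᵢ}` where `Hᵢ⁰ = ker fᵢ`, `Hᵢ^± = {v | ± fᵢ(v) > 0}`. -/
def cell (f : Fin n → ((Fin d → ℝ) →ₗ[ℝ] ℝ)) (σ : Fin n → SignType) : Set (Fin d → ℝ) :=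
  {v | ∀ i, SignType.sign (f i v) = σ i}

/-- A sign vector is (the sign vector of) a face iff its cell is nonempty. -/
def IsFaceVec (f : Fin n → ((Fin d → ℝ) →ₗ[ℝ] ℝ)) (σ : Fin n → SignType) : Prop :=
  (cell f σ).Nonempty

/-- The product of sign vectors: `τᵢ = σᵢ(x)` if `σᵢ(x) ≠ 0`, otherwise `τᵢ = σᵢ(y)`. -/
def mulVec (σ τ : Fin n → SignType) : Fin n → SignType :=
  fun i => if σ i = 0 then τ i else σ i

/-- If `ε > 0` and `ε|b| < |a|` whenever `a ≠ 0`, then the sign of `a + εb` is the sign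
of `a` when `a ≠ 0`, and the sign of `b` when `a = 0`. -/
lemma sign_add_eps (a b ε : ℝ) (hε : 0 < ε) (h : a ≠ 0 → ε * |b| < |a|) :
    SignType.sign (a + ε * b) = if a = 0 then SignType.sign b else SignType.sign a := by
  split_ifs with ha
  · subst ha
    rw [zero_add, sign_mul, sign_pos hε, one_mul]
  · have hb := h ha
    rcases lt_or_gt_of_ne ha with hneg | hpos
    · have h1 : ε * b ≤ ε * |b| := mul_le_mul_of_nonneg_left (le_abs_self b) hε.le
      have h2 : ε * |b| < -a := by rwa [abs_of_neg hneg] at hb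
      have : a + ε * b < 0 := by linarith
      rw [sign_neg this, sign_neg hneg]
    · have h1 : -(ε * |b|) ≤ ε * b := by
        have := mul_le_mul_of_nonneg_left (neg_abs_le b) hε.le
        linarith [this]
      have h2 : ε * |b| < a := by rwa [abs_of_pos hpos] at hb
      have : 0 < a + ε * b := by linarith
      rw [sign_pos this, sign_pos hpos]

theorem statement0 (f : Fin n → ((Fin d → ℝ) →ₗ[ℝ] ℝ)) (hf : ∀ i, f i ≠ 0) :
    -- the product of the sign vectors of two faces is the sign vector of a face
    (∀ σ τ : Fin n → SignType, IsFaceVec f σ → IsFaceVec f τ → IsFaceVec f (mulVec σ τ))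
    -- the all-zeros sign vector (that of `1 = ⋂ᵢ Hᵢ`) is the sign vector of a face
    ∧ IsFaceVec f (fun _ => 0)
    -- the product is associative …
    ∧ (∀ σ τ ρ : Fin n → SignType, mulVec (mulVec σ τ) ρ = mulVec σ (mulVec τ ρ))
    -- … and has the sign vector of `⋂ᵢ Hᵢ` as a two-sided identity,
    -- so that ℱ is a monoid
    ∧ (∀ σ : Fin n → SignType, mulVec (fun _ => 0) σ = σ ∧ mulVec σ (fun _ => 0) = σ) := by
  refine ⟨?_, ?_, ?_, ?_⟩
  · rintro σ τ ⟨x, hx⟩ ⟨y, hy⟩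
    -- choose ε > 0 small enough
    set g : Fin n → ℝ := fun i => if f i x = 0 then 1 else |f i x| / (|f i y| + 1) with hg
    set S : Finset ℝ := insert (1 : ℝ) (Finset.univ.image g) with hS
    have hSne : S.Nonempty := ⟨1, by simp [hS]⟩
    set ε : ℝ := S.min' hSne with hεdef
    have hgpos : ∀ i, 0 < g i := by
      intro i
      by_cases h : f i x = 0
      · simp [hg, h]
      · simp only [hg, h, if_false]
        exact div_pos (abs_pos.mpr h) (by positivity)
    have hεpos : 0 < ε := by
      have hmem : ε ∈ S := S.min'_mem hSne
      rw [hS, Finset.mem_insert] at hmem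
      rcases hmem with h | h
      · rw [h]; norm_num
      · obtain ⟨i, _, hi⟩ := Finset.mem_image.mp h
        rw [← hi]; exact hgpos i
    have hεle : ∀ i, ε ≤ g i := by
      intro i
      exact S.min'_le _ (Finset.mem_insert_of_mem (Finset.mem_image_of_mem g (Finset.mem_univ i)))
    refine ⟨x + ε • y, fun i => ?_⟩
    have hval : f i (x + ε • y) = f i x + ε * f i y := by
      rw [map_add, map_smul, smul_eq_mul]
    rw [hval, sign_add_eps (f i x) (f i y) ε hεpos ?_]
    · rw [mulVec, ← hx i, ← hy i]
      by_cases h : f i x = 0 <;> simp [h, sign_eq_zero_iff]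
    · intro h
      have h1 : ε ≤ |f i x| / (|f i y| + 1) := by
        have := hεle i
        simpa [hg, h] using this
      have h2 : ε * |f i y| ≤ |f i x| / (|f i y| + 1) * |f i y| :=
        mul_le_mul_of_nonneg_right h1 (abs_nonneg _)
      have h3 : |f i x| / (|f i y| + 1) * |f i y| < |f i x| := by
        rw [div_mul_eq_mul_div, div_lt_iff₀ (by positivity)]
        have : 0 < |f i x| := abs_pos.mpr h
        nlinarith [abs_nonneg (f i y)]
      linarith
  · exact ⟨0, fun i => by simp⟩
  · intro σ τ ρ
    funext i
    simp only [mulVec]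
    by_cases h1 : σ i = 0 <;> by_cases h2 : τ i = 0 <;> simp [h1, h2]
  · intro σ
    refine ⟨funext fun i => ?_, funext fun i => ?_⟩ <;> simp only [mulVec] <;>
      by_cases h : σ i = 0 <;> simp [h]
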